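/- Suppose r ≥ s ≥ 2. If 1 − p_k → 0 as k → ∞, then 1 − p_k = O(1/k²); that is, there exists a constant C > 0 such that 1 − p_k ≤ C/k² for all k ≥ 1. -/

import Mathlib

/-- `B r s p = ∑_{i=0}^{s-1} C(r,i) p^{r-i} (1-p)^i`, the probability that a
Binomial(r,p) random variable exceeds `r - s`. -/
noncomputable def B (r s : ℕ) (p : ℝ) : ℝ :=
  ∑ i ∈ Finset.range s, (r.choose i : ℝ) * p ^ (r - i) * (1 - p) ^ i

/-- `f k (x, p) = (k+1) B_{r,s}(p) - k B_{r,s}(x) - 2x + 1`. -/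
noncomputable def f (r s k : ℕ) (x p : ℝ) : ℝ :=
  ((k : ℝ) + 1) * B r s p - (k : ℝ) * B r s x - 2 * x + 1


lemma B_tail (r s : ℕ) (hsr : s ≤ r) (x : ℝ) :
    1 - B r s x = ∑ i ∈ Finset.Ico s (r+1), (r.choose i : ℝ) * x ^ (r - i) * (1 - x) ^ i := by
  have h1 : ((1 - x) + x) ^ r
      = ∑ i ∈ Finset.range (r+1), (1-x) ^ i * x ^ (r - i) * (r.choose i : ℝ) :=
    add_pow _ _ r
  have h2 : ((1-x) + x : ℝ) ^ r = 1 := by ring_nf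
  have h3 : ∑ i ∈ Finset.range (r+1), (r.choose i : ℝ) * x ^ (r - i) * (1 - x) ^ i = 1 := by
    rw [h2] at h1
    rw [show ∑ i ∈ Finset.range (r+1), (r.choose i : ℝ) * x ^ (r - i) * (1 - x) ^ i
        = ∑ i ∈ Finset.range (r+1), (1-x) ^ i * x ^ (r - i) * (r.choose i : ℝ) from
      Finset.sum_congr rfl (fun i _ => by ring)]
    exact h1.symm
  have h4 := Finset.sum_range_add_sum_Ico
    (fun i => (r.choose i : ℝ) * x ^ (r - i) * (1 - x) ^ i) (Nat.le_succ_of_le hsr)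
  rw [B]
  linarith [h4, h3]

lemma q_nonneg (r s : ℕ) (hsr : s ≤ r) {x : ℝ} (h0 : 0 ≤ x) (h1 : x ≤ 1) :
    0 ≤ 1 - B r s x := by
  rw [B_tail r s hsr]
  apply Finset.sum_nonneg
  intro i _
  have hx : (0:ℝ) ≤ 1 - x := by linarith
  positivity

lemma q_le (r s : ℕ) (hs : 2 ≤ s) (hsr : s ≤ r) {x : ℝ} (h0 : 0 ≤ x) (h1 : x ≤ 1) :
    1 - B r s x ≤ 2^r * (1-x)^2 := by
  rw [B_tail r s hsr]
  have hx : (0:ℝ) ≤ 1 - x := by linarith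
  have hx1 : (1:ℝ) - x ≤ 1 := by linarith
  calc ∑ i ∈ Finset.Ico s (r+1), (r.choose i : ℝ) * x ^ (r - i) * (1 - x) ^ i
      ≤ ∑ i ∈ Finset.Ico s (r+1), (r.choose i : ℝ) * (1-x)^2 := by
        apply Finset.sum_le_sum
        intro i hi
        have h2i : 2 ≤ i := le_trans hs (Finset.mem_Ico.mp hi).1
        have hxp : x ^ (r - i) ≤ 1 := pow_le_one₀ h0 h1
        have hxe : (1-x) ^ i ≤ (1-x)^2 := pow_le_pow_of_le_one hx hx1 h2i
        have hc : (0:ℝ) ≤ (r.choose i : ℝ) := Nat.cast_nonneg _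
        calc (r.choose i : ℝ) * x ^ (r - i) * (1 - x) ^ i
            ≤ (r.choose i : ℝ) * 1 * (1-x)^2 := by
              apply mul_le_mul (mul_le_mul le_rfl hxp (by positivity) hc) hxe (by positivity)
              positivity
          _ = (r.choose i : ℝ) * (1-x)^2 := by ring
    _ = (∑ i ∈ Finset.Ico s (r+1), (r.choose i : ℝ)) * (1-x)^2 := by
        rw [Finset.sum_mul]
    _ ≤ 2^r * (1-x)^2 := by
        apply mul_le_mul_of_nonneg_right _ (by positivity)
        have : ∑ i ∈ Finset.Ico s (r+1), (r.choose i : ℝ)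
            ≤ ∑ i ∈ Finset.range (r+1), (r.choose i : ℝ) := by
          apply Finset.sum_le_sum_of_subset_of_nonneg
          · intro i hi
            exact Finset.mem_range.mpr (Finset.mem_Ico.mp hi).2
          · intro i _ _; exact Nat.cast_nonneg _
        calc ∑ i ∈ Finset.Ico s (r+1), (r.choose i : ℝ) ≤ _ := this
          _ = ((2:ℕ)^r : ℝ) := by rw [← Nat.cast_sum]; exact_mod_cast Nat.sum_range_choose r
          _ = 2^r := by push_cast; ring

lemma step1 (R c1 e1 e0 X : ℝ) (hrc1 : R * c1 = 1/32) (hc1 : 0 < c1) (hRpos : 0 < R)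
    (hX : 1 ≤ X) (hr1 : 2*e1 ≤ (X+2)*(R*e0^2)) (ha2 : e0*X ≤ c1)
    (h0 : 0 ≤ e0) (h1 : 0 ≤ e1) : e1*(X+1) ≤ c1 := by
  have hXpos : (0:ℝ) < X := by linarith
  have b1 : e0^2 * X^2 ≤ c1^2 := by nlinarith [mul_nonneg h0 hXpos.le]
  have e5 : R * c1^2 = c1/32 := by
    rw [pow_two, ← mul_assoc, hrc1]; ring
  have b1' : R * (e0^2 * X^2) ≤ c1/32 := by
    rw [← e5]; exact mul_le_mul_of_nonneg_left b1 hRpos.le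
  have b3 : 2 * e1 * X^2 ≤ (X+2) * (c1/32) := by
    nlinarith [mul_le_mul_of_nonneg_right hr1 (sq_nonneg X),
      mul_le_mul_of_nonneg_left b1' (show (0:ℝ) ≤ X+2 by linarith)]
  have b5 : (X+2)*(X+1)*(c1/32) ≤ 2*X^2 * c1 := by
    nlinarith [mul_le_mul_of_nonneg_right
      (show (X+2)*(X+1) ≤ 64*X^2 by nlinarith) hc1.le]
  have b4 : e1 * (X+1) * (2*X^2) ≤ c1 * (2*X^2) := by
    nlinarith [mul_le_mul_of_nonneg_right b3 (show (0:ℝ) ≤ X+1 by linarith)]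
  exact le_of_mul_le_mul_right b4 (by positivity)

lemma step2 (R c0 e1 e0 X : ℝ) (hrc0 : R * c0 = 1/4) (hc0 : 0 < c0) (hRpos : 0 < R)
    (hX : 2 ≤ X) (hr1 : 2*e1 ≤ (X+2)*(R*e0^2)) (ha2 : e0*X^2 ≤ c0)
    (h0 : 0 ≤ e0) (h1 : 0 ≤ e1) : e1*(X+1)^2 ≤ c0 := by
  have hXpos : (0:ℝ) < X := by linarith
  have b1 : e0^2 * (X^2)^2 ≤ c0^2 := by nlinarith [mul_nonneg h0 (sq_nonneg X)]
  have e5 : R * c0^2 = c0/4 := by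
    rw [pow_two, ← mul_assoc, hrc0]; ring
  have b1' : R * (e0^2 * (X^2)^2) ≤ c0/4 := by
    rw [← e5]; exact mul_le_mul_of_nonneg_left b1 hRpos.le
  have b3 : 2 * e1 * (X^2)^2 ≤ (X+2) * (c0/4) := by
    nlinarith [mul_le_mul_of_nonneg_right hr1 (sq_nonneg (X^2)),
      mul_le_mul_of_nonneg_left b1' (show (0:ℝ) ≤ X+2 by linarith)]
  have b5 : (X+2)*(X+1)^2*(c0/4) ≤ 2*(X^2)^2 * c0 := by
    nlinarith [mul_le_mul_of_nonneg_right
      (show (X+2)*(X+1)^2 ≤ 8*(X^2)^2 by nlinarith [sq_nonneg X, sq_nonneg (X-1)]) hc0.le]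
  have b4 : e1 * (X+1)^2 * (2*(X^2)^2) ≤ c0 * (2*(X^2)^2) := by
    nlinarith [mul_le_mul_of_nonneg_right b3 (sq_nonneg (X+1))]
  exact le_of_mul_le_mul_right b4 (by positivity)

lemma aux1 (e m k c : ℝ) (h1 : e*m ≤ c/2) (h2 : k ≤ 2*m) (he : 0 ≤ e) : e*k ≤ c := by
  nlinarith
lemma aux2 (qq e Y c1 c0 : ℝ) (hq2 : Y^2*qq ≤ c1/32) (hb : e*Y ≤ c1) (hc1 : 0 < c1)
    (hcc : c0 = 8*c1) : (Y*qq + e)*(4*Y) ≤ c0 := by nlinarith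
lemma aux3 (e Y k c : ℝ) (h3 : e*Y*Y ≤ c/4) (h5 : k ≤ 2*Y) (h6 : 0 ≤ k) (he : 0 ≤ e)
    (hc : 0 ≤ c) : e*k^2 ≤ c := by
  nlinarith [mul_le_mul_of_nonneg_left (show k^2 ≤ 4*(Y*Y) by nlinarith) he]
lemma aux4 (e k c K : ℝ) (h1 : e*k^2 ≤ c) (hc : c ≤ 1) (hK : 1 ≤ K) : e*k^2 ≤ K^2 := by
  nlinarith
lemma aux5 (e k K : ℝ) (h1 : e ≤ 1) (he : 0 ≤ e) (hk : 0 ≤ k) (h2 : k ≤ K) :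
    e*k^2 ≤ K^2 := by
  nlinarith [mul_le_mul_of_nonneg_left (show k^2 ≤ K^2 by nlinarith) he]

/-- For `r ≥ s ≥ 2`: if `1 - p_k → 0` as `k → ∞`, then `1 - p_k = O(1/k²)`:
there is a constant `C > 0` with `1 - p_k ≤ C/k²` for all `k ≥ 1`. -/
theorem stmt_11 (r s : ℕ) (hs : 2 ≤ s) (hrs : s ≤ r) (p : ℕ → ℝ)
    (hp0 : p 0 = 0)
    (hp : ∀ k, 1 ≤ k → p k ∈ Set.Ioo (0 : ℝ) 1 ∧ f r s k (p k) (p (k - 1)) = 0)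
    (hlim : Filter.Tendsto (fun k => 1 - p k) Filter.atTop (nhds 0)) :
    ∃ C : ℝ, 0 < C ∧ ∀ k : ℕ, 1 ≤ k → 1 - p k ≤ C / (k : ℝ) ^ 2 := by
  set ε : ℕ → ℝ := fun k => 1 - p k with hε
  set q : ℕ → ℝ := fun k => 1 - B r s (p k) with hq
  clear_value ε q
  -- p k ∈ [0,1] for all k
  have hmem : ∀ k, 0 ≤ p k ∧ p k ≤ 1 := by
    intro k
    rcases Nat.eq_zero_or_pos k with h | h
    · rw [h, hp0]; norm_num
    · exact ⟨le_of_lt (hp k h).1.1, le_of_lt (hp k h).1.2⟩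
  have hε01 : ∀ k, 1 ≤ k → 0 < ε k ∧ ε k < 1 := by
    intro k hk
    constructor
    · simp only [hε]; linarith [(hp k hk).1.2]
    · simp only [hε]; linarith [(hp k hk).1.1]
  have hεnn : ∀ k, 0 ≤ ε k := by
    intro k; simp only [hε]; linarith [(hmem k).2]
  have hQ0 : ∀ k, 0 ≤ q k := by
    intro k; simp only [hq]; exact q_nonneg r s hrs (hmem k).1 (hmem k).2
  have hQle : ∀ k, q k ≤ 2^r * (ε k)^2 := by
    intro k; simp only [hq, hε]; exact q_le r s hs hrs (hmem k).1 (hmem k).2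
  -- the identity from f = 0
  have hid : ∀ n : ℕ, 1 ≤ n →
      2 * ε n = ((n:ℝ)+1) * q (n-1) - (n:ℝ) * q n := by
    intro n hn
    have h := (hp n hn).2
    rw [f] at h
    simp only [hε, hq]
    ring_nf
    ring_nf at h
    linarith
  -- one-step recurrence inequality
  have hrec : ∀ n : ℕ, 1 ≤ n →
      2 * ε n ≤ ((n:ℝ)+1) * (2^r * (ε (n-1))^2) := by
    intro n hn
    have h := hid n hn
    have h1 : (0:ℝ) ≤ (n:ℝ) * q n := mul_nonneg (Nat.cast_nonneg n) (hQ0 n)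
    have h2 : ((n:ℝ)+1) * q (n-1) ≤ ((n:ℝ)+1) * (2^r * (ε (n-1))^2) := by
      apply mul_le_mul_of_nonneg_left (hQle _) (by positivity)
    linarith
  -- telescoping identity
  have hD : ∀ m : ℕ, 1 ≤ m → ∀ n, m ≤ n →
      2 * (∑ k ∈ Finset.Ico (m+1) (n+1), ε k) + (n:ℝ) * q n
        = (m:ℝ) * q m + 2 * (∑ k ∈ Finset.Ico m n, q k) := by
    intro m hm n hn
    induction n, hn using Nat.le_induction with
    | base => simp
    | succ n hmn ih =>
      have hidn := hid (n+1) (by omega)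
      have e1 : ∑ k ∈ Finset.Ico (m+1) (n+1+1), ε k
          = (∑ k ∈ Finset.Ico (m+1) (n+1), ε k) + ε (n+1) :=
        Finset.sum_Ico_succ_top (by omega) _
      have e2 : ∑ k ∈ Finset.Ico m (n+1), q k
          = (∑ k ∈ Finset.Ico m n, q k) + q n :=
        Finset.sum_Ico_succ_top (by omega) _
      have e3 : (n+1 : ℕ) - 1 = n := by omega
      rw [e3] at hidn
      push_cast at hidn ⊢
      rw [e1, e2]
      linarith
  -- choose N with smallness
  have hsmall : ∀ᶠ k in Filter.atTop, ε k < 1/2^(r+1) :=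
    hlim.eventually (Iio_mem_nhds (by positivity))
  obtain ⟨N0, hN0⟩ := Filter.eventually_atTop.mp hsmall
  set N := max N0 2 with hNdef
  have hN2 : 2 ≤ N := le_max_right _ _
  have hNs : ∀ k, N ≤ k → ε k ≤ 1/2^(r+1) := fun k hk =>
    le_of_lt (hN0 k (le_trans (le_max_left _ _) hk))
  have hqhalf : ∀ k, N ≤ k → q k ≤ ε k / 2 := by
    intro k hk
    have h1 := hQle k
    have h2 := hNs k hk
    have h3 := hεnn k
    have hp2 : (0:ℝ) < 2^r := by positivity
    have h4 : (2:ℝ)^r * ε k ≤ 1/2 := by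
      have h5 := mul_le_mul_of_nonneg_left h2 hp2.le
      have he : (2:ℝ)^r * (1/2^(r+1)) = 1/2 := by
        rw [pow_succ]; field_simp
      rw [he] at h5
      exact h5
    nlinarith [mul_le_mul_of_nonneg_right h4 h3]
  -- partial-sum bound
  have hE : ∀ m, N ≤ m → ∀ n, m ≤ n →
      ∑ k ∈ Finset.Ico (m+1) (n+1), ε k ≤ (m:ℝ) * q m + ε m := by
    intro m hm n hn
    have hD' := hD m (by omega) n hn
    have hqsum : ∑ k ∈ Finset.Ico m n, q k ≤ ∑ k ∈ Finset.Ico m n, ε k / 2 := by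
      apply Finset.sum_le_sum
      intro k hk
      exact hqhalf k (le_trans hm (Finset.mem_Ico.mp hk).1)
    have hsum2 : ∑ k ∈ Finset.Ico m n, ε k ≤ ε m + ∑ k ∈ Finset.Ico (m+1) (n+1), ε k := by
      have h1 : ∑ k ∈ Finset.Ico m (n+1), ε k = ε m + ∑ k ∈ Finset.Ico (m+1) (n+1), ε k :=
        Finset.sum_eq_sum_Ico_succ_bot (by omega) _
      have h2 : ∑ k ∈ Finset.Ico m n, ε k ≤ ∑ k ∈ Finset.Ico m (n+1), ε k := by
        apply Finset.sum_le_sum_of_subset_of_nonneg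
        · exact Finset.Ico_subset_Ico le_rfl (by omega)
        · intro i _ _; exact hεnn i
      linarith
    have hqn : (0:ℝ) ≤ (n:ℝ) * q n := mul_nonneg (Nat.cast_nonneg n) (hQ0 n)
    have hdiv : (∑ k ∈ Finset.Ico m n, ε k)/2 = ∑ k ∈ Finset.Ico m n, ε k / 2 :=
      Finset.sum_div _ _ _
    linarith
  have hεle1 : ∀ k, 1 ≤ k → ε k ≤ 1 := fun k hk => le_of_lt (hε01 k hk).2
  have hp2r : (0:ℝ) < 2^r := by positivity
  have hA : ∀ n, ∑ k ∈ Finset.Ico (N+1) (n+1), ε k ≤ (N:ℝ) * 2^r + 1 := by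
    intro n
    rcases le_or_gt N n with h | h
    · have h1 := hE N le_rfl n h
      have hqN : q N ≤ 2^r := by
        have h2 := hQle N
        have h3 := hεnn N
        have h4 := hεle1 N (by omega)
        nlinarith [mul_le_mul_of_nonneg_right h4 h3]
      have h2 : (N:ℝ) * q N ≤ (N:ℝ) * 2^r :=
        mul_le_mul_of_nonneg_left hqN (Nat.cast_nonneg N)
      have h3 := hεle1 N (by omega)
      linarith
    · rw [Finset.Ico_eq_empty (by omega)]
      simp only [Finset.sum_empty]
      positivity
  -- constants
  set c1 : ℝ := 1/2^(r+5) with hc1def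
  set c0 : ℝ := 1/2^(r+2) with hc0def
  have hc1pos : 0 < c1 := by positivity
  have hc0pos : 0 < c0 := by positivity
  have hrc1 : (2:ℝ)^r * c1 = 1/32 := by
    rw [hc1def, pow_add]; field_simp; norm_num
  have hrc0 : (2:ℝ)^r * c0 = 1/4 := by
    rw [hc0def, pow_add]; field_simp; norm_num
  have hc0c1 : c0 = 8 * c1 := by
    rw [hc0def, hc1def, pow_add, pow_add]; field_simp; ring
  -- window extraction
  have hW : ∀ M, N ≤ M → ∃ m, M ≤ m ∧ ∑ k ∈ Finset.Ico (m+1) (2*m+1), ε k ≤ c1/2 := by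
    intro M hM
    by_contra hcon
    push_neg at hcon
    have key : ∀ j : ℕ, (j:ℝ) * (c1/2) ≤ ∑ k ∈ Finset.Ico (M+1) (2^j * M + 1), ε k := by
      intro j
      induction j with
      | zero => simp
      | succ j ih =>
        have h2j : 1 ≤ 2^j := Nat.one_le_two_pow
        have hMm : M ≤ 2^j * M := by calc M = 1*M := (one_mul M).symm
          _ ≤ 2^j*M := Nat.mul_le_mul_right M h2j
        have hsplit : (∑ k ∈ Finset.Ico (M+1) (2^j*M+1), ε k)
            + ∑ k ∈ Finset.Ico (2^j*M+1) (2^(j+1)*M+1), ε k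
            = ∑ k ∈ Finset.Ico (M+1) (2^(j+1)*M+1), ε k := by
          apply Finset.sum_Ico_consecutive
          · omega
          · have : 2^j*M ≤ 2^(j+1)*M := by
              apply Nat.mul_le_mul_right
              exact Nat.pow_le_pow_right (by norm_num) (by omega)
            omega
        have hwin := hcon (2^j*M) hMm
        have heq : 2^(j+1)*M = 2*(2^j*M) := by ring
        rw [← heq] at hwin
        rw [← hsplit]
        push_cast
        linarith [le_of_lt hwin]
    obtain ⟨j, hj⟩ := exists_nat_gt (((N:ℝ) * 2^r + 2) * 2 / c1)
    have hkey := key j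
    have hA' := hA (2^j * M)
    have hsub : ∑ k ∈ Finset.Ico (M+1) (2^j*M+1), ε k
        ≤ ∑ k ∈ Finset.Ico (N+1) (2^j*M+1), ε k := by
      apply Finset.sum_le_sum_of_subset_of_nonneg
      · exact Finset.Ico_subset_Ico (by omega) le_rfl
      · intro i _ _; exact hεnn i
    have hjc : ((N:ℝ) * 2^r + 2) * 2 < (j:ℝ) * c1 := by
      rw [div_lt_iff₀ hc1pos] at hj
      linarith
    linarith
  -- pigeonhole
  have hP : ∀ m : ℕ, 1 ≤ m → ∀ S : ℝ, ∑ k ∈ Finset.Ico (m+1) (2*m+1), ε k ≤ S →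
      ∃ k, m+1 ≤ k ∧ k ≤ 2*m ∧ ε k ≤ S/m := by
    intro m hm S hS
    by_contra hcon
    push_neg at hcon
    have hcard : (Finset.Ico (m+1) (2*m+1)).card = m := by
      rw [Nat.card_Ico]; omega
    have hne : (Finset.Ico (m+1) (2*m+1)).Nonempty := by
      rw [← Finset.card_pos, hcard]; omega
    have hlt : ∑ _k ∈ Finset.Ico (m+1) (2*m+1), (S/(m:ℝ)) < ∑ k ∈ Finset.Ico (m+1) (2*m+1), ε k := by
      apply Finset.sum_lt_sum_of_nonempty hne
      intro k hk
      have hk' := Finset.mem_Ico.mp hk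
      exact hcon k hk'.1 (by omega)
    rw [Finset.sum_const, hcard, nsmul_eq_mul] at hlt
    have hm' : (0:ℝ) < m := by exact_mod_cast hm
    have heq : (m:ℝ) * (S/m) = S := by field_simp
    rw [heq] at hlt
    linarith
  -- bootstrap 1: ε k ≤ c1 / k
  have hind1 : ∀ k1, 1 ≤ k1 → ε k1 * k1 ≤ c1 → ∀ k, k1 ≤ k → ε k * k ≤ c1 := by
    intro k1 hk1 hbase k hk
    induction k, hk using Nat.le_induction with
    | base => exact hbase
    | succ n hn ih =>
      have hn1 : 1 ≤ n := le_trans hk1 hn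
      have hX : (1:ℝ) ≤ (n:ℝ) := by exact_mod_cast hn1
      have hXpos : (0:ℝ) < (n:ℝ) := by linarith
      have hr1 := hrec (n+1) (by omega)
      have e3 : (n+1 : ℕ) - 1 = n := by omega
      rw [e3] at hr1
      push_cast at hr1
      have hr1' : 2 * ε (n+1) ≤ ((n:ℝ)+2) * (2^r * ε n^2) := by linarith
      have hfin : ε (n+1) * ((n:ℝ)+1) ≤ c1 :=
        step1 (2^r) c1 (ε (n+1)) (ε n) (n:ℝ) hrc1 hc1pos hp2r hX hr1' ih (hεnn n) (hεnn (n+1))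
      push_cast
      exact hfin
  -- bootstrap 2: ε k ≤ c0 / k²
  have hind2 : ∀ k0, 2 ≤ k0 → ε k0 * (k0:ℝ)^2 ≤ c0 → ∀ k, k0 ≤ k → ε k * (k:ℝ)^2 ≤ c0 := by
    intro k0 hk0 hbase k hk
    induction k, hk using Nat.le_induction with
    | base => exact hbase
    | succ n hn ih =>
      have hn1 : 2 ≤ n := le_trans hk0 hn
      have hX : (2:ℝ) ≤ (n:ℝ) := by exact_mod_cast hn1
      have hXpos : (0:ℝ) < (n:ℝ) := by linarith
      have hr1 := hrec (n+1) (by omega)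
      have e3 : (n+1 : ℕ) - 1 = n := by omega
      rw [e3] at hr1
      push_cast at hr1
      have hr1' : 2 * ε (n+1) ≤ ((n:ℝ)+2) * (2^r * ε n^2) := by linarith
      have hfin : ε (n+1) * ((n:ℝ)+1)^2 ≤ c0 :=
        step2 (2^r) c0 (ε (n+1)) (ε n) (n:ℝ) hrc0 hc0pos hp2r hX hr1' ih (hεnn n) (hεnn (n+1))
      push_cast
      exact hfin
  -- assembly
  obtain ⟨m1, hm1N, hm1win⟩ := hW N le_rfl
  have hm1pos : (0:ℝ) < (m1:ℝ) := by exact_mod_cast (show 0 < m1 by omega)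
  obtain ⟨k1, hk1lo, hk1hi, hk1ε⟩ := hP m1 (by omega) (c1/2) hm1win
  have base1 : ε k1 * k1 ≤ c1 := by
    have h1 : ε k1 * m1 ≤ c1/2 := (le_div_iff₀ hm1pos).mp hk1ε
    have h2 : (k1:ℝ) ≤ 2*m1 := by exact_mod_cast hk1hi
    exact aux1 (ε k1) (m1:ℝ) (k1:ℝ) c1 h1 h2 (hεnn k1)
  have hq1 : ∀ k, k1 ≤ k → ε k * k ≤ c1 := hind1 k1 (by omega) base1
  set Y := (k1:ℝ) with hYdef
  have hYpos : (0:ℝ) < Y := by rw [hYdef]; exact_mod_cast (show 0 < k1 by omega)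
  have hwin2 : ∑ k ∈ Finset.Ico (k1+1) (2*k1+1), ε k ≤ c0/(4*Y) := by
    have h1 := hE k1 (by omega) (2*k1) (by omega)
    have h2 : Y * q k1 + ε k1 ≤ c0/(4*Y) := by
      rw [le_div_iff₀ (by positivity)]
      have hQ := hQle k1
      have hb : ε k1 * Y ≤ c1 := hq1 k1 le_rfl
      have hεn := hεnn k1
      have hsq : ε k1^2 * Y^2 ≤ c1^2 := by nlinarith [mul_nonneg hεn hYpos.le]
      have e5 : (2:ℝ)^r * c1^2 = c1/32 := by
        rw [pow_two, ← mul_assoc, hrc1]; ring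
      have hq2 : Y^2 * q k1 ≤ c1/32 := by
        calc Y^2 * q k1 ≤ Y^2 * (2^r * ε k1^2) :=
              mul_le_mul_of_nonneg_left hQ (by positivity)
          _ = 2^r * (ε k1^2 * Y^2) := by ring
          _ ≤ 2^r * c1^2 := mul_le_mul_of_nonneg_left hsq (by positivity)
          _ = c1/32 := e5
      exact aux2 (q k1) (ε k1) Y c1 c0 hq2 hb hc1pos hc0c1
    linarith
  obtain ⟨k0, hk0lo, hk0hi, hk0ε⟩ := hP k1 (by omega) (c0/(4*Y)) hwin2
  have base2 : ε k0 * (k0:ℝ)^2 ≤ c0 := by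
    have h2 : ε k0 * Y ≤ c0/(4*Y) := (le_div_iff₀ hYpos).mp hk0ε
    have h3 : ε k0 * Y * Y ≤ c0/(4*Y) * Y := mul_le_mul_of_nonneg_right h2 hYpos.le
    have h4 : c0/(4*Y) * Y = c0/4 := by field_simp
    rw [h4] at h3
    have h5 : (k0:ℝ) ≤ 2*Y := by rw [hYdef]; exact_mod_cast hk0hi
    have h6 : (0:ℝ) ≤ (k0:ℝ) := Nat.cast_nonneg _
    exact aux3 (ε k0) Y (k0:ℝ) c0 h3 h5 h6 (hεnn k0) hc0pos.le
  have hq2' : ∀ k, k0 ≤ k → ε k * (k:ℝ)^2 ≤ c0 := hind2 k0 (by omega) base2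
  have hk0posR : (0:ℝ) < (k0:ℝ) := by exact_mod_cast (show 0 < k0 by omega)
  have hk0one : (1:ℝ) ≤ (k0:ℝ) := by exact_mod_cast (show 1 ≤ k0 by omega)
  refine ⟨(k0:ℝ)^2, by positivity, ?_⟩
  intro k hk
  have hkposR : (0:ℝ) < (k:ℝ) := by exact_mod_cast hk
  have hkp2 : (0:ℝ) < (k:ℝ)^2 := by positivity
  have hεk : (1:ℝ) - p k = ε k := by rw [hε]
  rw [hεk, le_div_iff₀ hkp2]
  have hc01 : c0 ≤ 1 := by
    rw [hc0def, div_le_one (by positivity)]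
    calc (1:ℝ) = 1^(r+2) := by norm_num
      _ ≤ 2^(r+2) := pow_le_pow_left₀ (by norm_num) (by norm_num) _
  rcases le_or_gt k0 k with h | h
  · have h1 := hq2' k h
    exact aux4 (ε k) (k:ℝ) c0 (k0:ℝ) h1 hc01 hk0one
  · have h1 := hεle1 k hk
    have h2 : (k:ℝ) ≤ (k0:ℝ) := by exact_mod_cast le_of_lt h
    exact aux5 (ε k) (k:ℝ) (k0:ℝ) h1 (hεnn k) hkposR.le h2
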